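/- Let p ≥ 7 be a prime, n = (p-1)/2, ζ a primitive p-th root of unity in ℂ, K = ℚ(ζ + ζ^{-1}), O_K = ℤ[ζ + ζ^{-1}], and e_j = ζ^j + ζ^{-j}. Let I be the ℤ-submodule of O_K spanned by {e_1, e_2, …, e_{n-1}, 2e_n}. Then I is not an ideal of O_K: specifically, e_n ∉ I, and the product e_1 · e_{n-1} (which lies in O_K) does not lie in I. -/

import Mathlib

open scoped IntermediateField

/-- With `K = ℚ(ζ + ζ⁻¹)` for `ζ` a primitive `p`-th root of unity
(`p ≥ 7` prime), `n = (p-1)/2`, `O_K = ℤ[ζ + ζ⁻¹]`, the `ℤ`-submodule `I` of `O_K`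
spanned by `{e₁, …, e_{n-1}, 2eₙ}` is not an ideal of `O_K`: specifically `eₙ ∉ I`
and `e₁ · e_{n-1}` (which lies in `O_K`) does not lie in `I`. -/
theorem span_not_ideal_odd_prime
    (p n : ℕ) (hp : p.Prime) (hp7 : 7 ≤ p) (hn : p = 2 * n + 1)
    (ζ : ℂ) (hζ : IsPrimitiveRoot ζ p)
    (ξ : ℚ⟮ζ + ζ⁻¹⟯) (hξ : (ξ : ℂ) = ζ + ζ⁻¹)
    (e : ℕ → ℚ⟮ζ + ζ⁻¹⟯)
    (he : ∀ j : ℕ, 1 ≤ j → ((e j : ℂ) = ζ ^ j + ζ⁻¹ ^ j))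
    (I : Submodule ℤ ℚ⟮ζ + ζ⁻¹⟯)
    (hI : I = Submodule.span ℤ
      ((e '' {i : ℕ | 1 ≤ i ∧ i ≤ n - 1}) ∪ {2 * e n})) :
    e n ∉ I ∧
    e 1 * e (n - 1) ∈ Algebra.adjoin ℤ ({ξ} : Set ℚ⟮ζ + ζ⁻¹⟯) ∧
    e 1 * e (n - 1) ∉ I ∧
    ¬(∀ z ∈ Algebra.adjoin ℤ ({ξ} : Set ℚ⟮ζ + ζ⁻¹⟯), ∀ x ∈ I, z * x ∈ I) := by
  have hn3 : 3 ≤ n := by omega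
  have hζ0 : ζ ≠ 0 := hζ.ne_zero hp.pos.ne'
  -- linear independence of ζ, ζ², ..., ζ^(p-1)
  have li : LinearIndependent ℚ (fun k : Fin (p - 1) => ζ ^ ((k : ℕ) + 1)) := by
    have hdeg : (minpoly ℚ ζ).natDegree = p - 1 := by
      rw [← Polynomial.cyclotomic_eq_minpoly_rat hζ hp.pos, Polynomial.natDegree_cyclotomic,
        Nat.totient_prime hp]
    have li0 : LinearIndependent ℚ (fun k : Fin (p - 1) => ζ ^ (k : ℕ)) := by
      have := linearIndependent_pow (K := ℚ) ζ
      rw [hdeg] at this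
      exact this
    have hker : LinearMap.ker (LinearMap.mulLeft ℚ ζ) = ⊥ := by
      rw [LinearMap.ker_eq_bot]
      exact mul_right_injective₀ hζ0
    have := li0.map' (LinearMap.mulLeft ℚ ζ) hker
    convert this using 2 with k
    all_goals try rfl
    simp [LinearMap.mulLeft_apply, pow_succ, mul_comm]
  -- the coordinate functional extended to ℂ
  set v : Fin (p - 1) → ℂ := fun k => ζ ^ ((k : ℕ) + 1) with hv
  set S : Submodule ℚ ℂ := Submodule.span ℚ (Set.range v) with hS
  let b : Module.Basis (Fin (p - 1)) ℚ S := Module.Basis.span li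
  have i0 : Fin (p - 1) := ⟨n - 1, by omega⟩
  obtain ⟨φ, hφ⟩ := LinearMap.exists_extend (b.coord ⟨n - 1, by omega⟩)
  have hφv : ∀ k : Fin (p - 1), φ (v k) = if (k : ℕ) = n - 1 then 1 else 0 := by
    intro k
    have h1 : φ (v k) = φ (S.subtype (b k)) := by
      congr 1
      exact congrArg Subtype.val (Module.Basis.span_apply li k).symm
    rw [h1, ← LinearMap.comp_apply, hφ, Module.Basis.coord_apply, Module.Basis.repr_self,
      Finsupp.single_apply]
    simp [Fin.ext_iff, eq_comm]
  have hφpow : ∀ m : ℕ, 1 ≤ m → m ≤ p - 1 → φ (ζ ^ m) = if m = n then 1 else 0 := by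
    intro m h1 h2
    have hk : ζ ^ m = v ⟨m - 1, by omega⟩ := by
      simp only [hv]
      congr 1
      omega
    rw [hk, hφv]
    simp only
    congr 1
    simp only [eq_iff_iff]
    omega
  -- the functional ψ on K
  set ψ : ℚ⟮ζ + ζ⁻¹⟯ →ₗ[ℤ] ℚ :=
    (φ.comp (ℚ⟮ζ + ζ⁻¹⟯.val.toLinearMap)).restrictScalars ℤ with hψdef
  have hψcoe : ∀ x : ℚ⟮ζ + ζ⁻¹⟯, ψ x = φ (x : ℂ) := fun x => rfl
  -- ζ⁻¹ ^ j = ζ ^ (p - j)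
  have hinv : ∀ j : ℕ, j ≤ p → ζ⁻¹ ^ j = ζ ^ (p - j) := by
    intro j hj
    rw [inv_pow]
    refine inv_eq_of_mul_eq_one_right ?_
    rw [← pow_add]
    have : j + (p - j) = p := by omega
    rw [this, hζ.pow_eq_one]
  have hψ : ∀ j : ℕ, 1 ≤ j → j ≤ n → ψ (e j) = if j = n then 1 else 0 := by
    intro j h1 h2
    rw [hψcoe, he j h1, map_add, hinv j (by omega),
      hφpow j h1 (by omega), hφpow (p - j) (by omega) (by omega)]
    have : ¬(p - j = n) := by omega
    simp only [this, if_false, add_zero]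
  -- ψ maps I into span ℤ {2}
  set J : Submodule ℤ ℚ := Submodule.span ℤ {(2 : ℚ)} with hJ
  have hIJ : ∀ x ∈ I, ψ x ∈ J := by
    intro x hx
    rw [hI] at hx
    have hle : Submodule.span ℤ ((e '' {i : ℕ | 1 ≤ i ∧ i ≤ n - 1}) ∪ {2 * e n})
        ≤ J.comap ψ := by
      rw [Submodule.span_le]
      rintro y (⟨j, ⟨hj1, hj2⟩, rfl⟩ | rfl)
      · have : ψ (e j) = 0 := by
          rw [hψ j hj1 (by omega)]
          simp only [if_neg (by omega : ¬ j = n)]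
        simp only [SetLike.mem_coe, Submodule.mem_comap, this]
        exact J.zero_mem
      · have : ψ (2 * e n) = 2 := by
          have h2 : (2 : ℚ⟮ζ + ζ⁻¹⟯) * e n = e n + e n := by ring
          rw [h2, map_add, hψ n (by omega) le_rfl, if_pos rfl]
          norm_num
        simp only [SetLike.mem_coe, Submodule.mem_comap, this]
        exact Submodule.subset_span rfl
    exact hle hx
  have hone : (1 : ℚ) ∉ J := by
    intro h
    rw [hJ, Submodule.mem_span_singleton] at h
    obtain ⟨a, ha⟩ := h
    rw [zsmul_eq_mul] at ha
    have : ((a * 2 : ℤ) : ℚ) = ((1 : ℤ) : ℚ) := by push_cast; rw [← ha]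
    have := Int.cast_injective (α := ℚ) this
    omega
  have henI : e n ∉ I := by
    intro h
    have := hIJ _ h
    rw [hψ n (by omega) le_rfl, if_pos rfl] at this
    exact hone this
  -- e j ∈ ℤ[ξ] for all j ≥ 1
  have hcast : ∀ x y : ℚ⟮ζ + ζ⁻¹⟯, (x : ℂ) = (y : ℂ) → x = y := fun x y h => Subtype.ext h
  have he1 : e 1 = ξ := by
    apply hcast
    rw [he 1 le_rfl, hξ]
    simp
  have hrec : ∀ m : ℕ, e (m + 3) = ξ * e (m + 2) - e (m + 1) := by
    intro m
    apply hcast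
    push_cast [he (m + 3) (by omega), he (m + 2) (by omega), he (m + 1) (by omega), hξ]
    rw [inv_pow, inv_pow, inv_pow]
    field_simp
    ring
  have he2 : e 2 = ξ * ξ - 2 := by
    apply hcast
    have h2K : ((2 : ℚ⟮ζ + ζ⁻¹⟯) : ℂ) = 2 := by norm_cast
    push_cast [he 2 (by omega), hξ, h2K]
    field_simp
    ring
  have hmem : ∀ j : ℕ, 1 ≤ j → e j ∈ Algebra.adjoin ℤ ({ξ} : Set ℚ⟮ζ + ζ⁻¹⟯) := by
    intro j
    induction j using Nat.strong_induction_on with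
    | _ j ih =>
      intro hj1
      match j, hj1 with
      | 1, _ => exact he1 ▸ Algebra.subset_adjoin rfl
      | 2, _ =>
        rw [he2]
        exact sub_mem (mul_mem (Algebra.subset_adjoin rfl) (Algebra.subset_adjoin rfl))
          (by exact_mod_cast Subalgebra.natCast_mem _ 2)
      | (m + 3), _ =>
        rw [hrec m]
        exact sub_mem (mul_mem (Algebra.subset_adjoin rfl) (ih (m + 2) (by omega) (by omega)))
          (ih (m + 1) (by omega) (by omega))
  -- e 1 * e (n-1) = e n + e (n-2)
  have hprod : e 1 * e (n - 1) = e n + e (n - 2) := by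
    obtain ⟨m, rfl⟩ : ∃ m, n = m + 3 := ⟨n - 3, by omega⟩
    have h1 : m + 3 - 1 = m + 2 := by omega
    have h2 : m + 3 - 2 = m + 1 := by omega
    rw [h1, h2]
    apply hcast
    push_cast [he 1 le_rfl, he (m + 2) (by omega), he (m + 3) (by omega),
      he (m + 1) (by omega)]
    simp only [inv_pow]
    field_simp
    ring
  have hn2I : e (n - 2) ∈ I := by
    rw [hI]
    exact Submodule.subset_span (Or.inl ⟨n - 2, ⟨by omega, by omega⟩, rfl⟩)
  have hn1I : e (n - 1) ∈ I := by
    rw [hI]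
    exact Submodule.subset_span (Or.inl ⟨n - 1, ⟨by omega, by omega⟩, rfl⟩)
  have hprodI : e 1 * e (n - 1) ∉ I := by
    intro h
    apply henI
    have : e n = e 1 * e (n - 1) - e (n - 2) := by rw [hprod]; ring
    rw [this]
    exact sub_mem h hn2I
  refine ⟨henI, mul_mem (hmem 1 le_rfl) (hmem (n - 1) (by omega)), hprodI, ?_⟩
  intro h
  exact hprodI (h (e 1) (hmem 1 le_rfl) (e (n - 1)) hn1I)
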